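/- Schur's inequality: for all a, b ∈ ℓ²(ℤ), |Σ_{m∈ℤ} Σ_{n∈ℤ, n≠m} a_n·b_m/(m−n)| ≤ π·‖a‖_{ℓ²}·‖b‖_{ℓ²}; equivalently, the discrete Hilbert transform (H a)_m = (1/π)·Σ_{n≠m} a_n/(m−n) has ℓ²→ℓ² operator norm at most 1. -/

import Mathlib

set_option maxHeartbeats 1000000

open Complex intervalIntegral Finset
open scoped Real

/-- The ℓ²-type norm of a sequence: `√(∑ |f m|²)`. -/
noncomputable def l2norm (f : ℤ → ℂ) : ℝ := Real.sqrt (∑' m : ℤ, ‖f m‖ ^ 2)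

/-- The discrete Hilbert transform `(H a)_m = (1/π)·∑_{n≠m} a_n/(m−n)`. -/
noncomputable def Hop (a : ℤ → ℂ) (m : ℤ) : ℂ :=
  (1 / (Real.pi : ℂ)) * ∑' n : {n : ℤ // n ≠ m}, a n.1 / ((m : ℂ) - (n.1 : ℂ))

/-- The shifted discrete Hilbert transform `(H_d a)_m = (1/π)·∑_{n≠m} a_n/(n−m+d)`. -/
noncomputable def Hdop (d : ℝ) (a : ℤ → ℂ) (m : ℤ) : ℂ :=
  (1 / (Real.pi : ℂ)) * ∑' n : {n : ℤ // n ≠ m}, a n.1 / ((n.1 : ℂ) - (m : ℂ) + (d : ℂ))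

/-- Schur's inequality: for `a, b ∈ ℓ²(ℤ)`,
`|∑_m ∑_{n≠m} a_n b_m/(m−n)| ≤ π·‖a‖·‖b‖`. -/
noncomputable def ee (n : ℤ) (x : ℝ) : ℂ := Complex.exp (2 * Real.pi * Complex.I * n * x)
noncomputable def KK (x : ℝ) : ℂ := (-2 * Real.pi * Complex.I) * (x - 1/2)
noncomputable def kfun (j : ℤ) : ℂ := if j = 0 then 0 else 1/(j:ℂ)

lemma ee_cont (n : ℤ) : Continuous (ee n) := by
  unfold ee; fun_prop

lemma KK_cont : Continuous KK := by unfold KK; fun_prop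

lemma ee_eq (n : ℤ) (x : ℝ) : ee n x = Complex.exp ((2 * Real.pi * Complex.I * n) * x) := by
  unfold ee; ring_nf

lemma ee_mul (n k : ℤ) (x : ℝ) : ee n x * ee k x = ee (n + k) x := by
  unfold ee; rw [← Complex.exp_add]; push_cast; ring_nf

lemma ee_conj (n : ℤ) (x : ℝ) : (starRingEnd ℂ) (ee n x) = ee (-n) x := by
  unfold ee
  rw [← Complex.exp_conj]
  congr 1
  have h : ((2:ℂ) * Real.pi * Complex.I * n * x) = ((2*Real.pi*(n:ℝ)*x : ℝ) : ℂ) * Complex.I := by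
    push_cast; ring
  rw [h, map_mul, Complex.conj_ofReal, Complex.conj_I]
  push_cast; ring

lemma int_ee (j : ℤ) : (∫ x in (0:ℝ)..1, ee j x) = if j = 0 then 1 else 0 := by
  rcases eq_or_ne j 0 with h | h
  · subst h; simp [ee]
  · rw [if_neg h]
    have hc : (2 * (Real.pi:ℂ) * Complex.I * j) ≠ 0 := by
      simp [Real.pi_ne_zero, Complex.I_ne_zero, h]
    simp only [ee_eq]
    rw [integral_exp_mul_complex hc]
    have h1 : Complex.exp (2 * (Real.pi:ℂ) * Complex.I * j * 1) = 1 := by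
      rw [mul_one]
      have := Complex.exp_int_mul_two_pi_mul_I j
      rw [← this]; congr 1; push_cast; ring
    push_cast
    rw [h1, mul_zero, Complex.exp_zero, sub_self, zero_div]

lemma int_x_exp (c : ℂ) (hc : c ≠ 0) :
    (∫ x in (0:ℝ)..1, (x:ℂ) * Complex.exp (c * x))
      = ((c - 1) * Complex.exp c + 1) / c ^ 2 := by
  have key : ∀ x : ℝ, HasDerivAt (fun y : ℝ => ((c * y - 1) * Complex.exp (c * y)) / c ^ 2)
      ((x:ℂ) * Complex.exp (c * x)) x := by
    intro x
    have h1 : HasDerivAt (fun z : ℂ => c * z - 1) c (x:ℂ) := by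
      simpa using ((hasDerivAt_id (x:ℂ)).const_mul c).sub_const 1
    have h2 : HasDerivAt (fun z : ℂ => Complex.exp (c * z))
        (Complex.exp (c * (x:ℂ)) * c) (x:ℂ) := by
      have := (Complex.hasDerivAt_exp (c * (x:ℂ))).comp (x:ℂ)
        (by simpa using (hasDerivAt_id (x:ℂ)).const_mul c)
      simpa [Function.comp_def] using this
    have h3 := ((h1.mul h2).div_const (c^2)).comp_ofReal
    convert h3 using 1
    · rfl
    rw [eq_div_iff (pow_ne_zero 2 hc)]
    ring
  rw [intervalIntegral.integral_eq_sub_of_hasDerivAt (fun x _ => key x)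
    ((by fun_prop : Continuous fun x : ℝ => (x:ℂ) * Complex.exp (c * x)).intervalIntegrable 0 1)]
  push_cast
  rw [mul_one, mul_zero, Complex.exp_zero]
  field_simp
  ring

lemma kcoeff (j : ℤ) : (∫ x in (0:ℝ)..1, KK x * ee (-j) x) = kfun j := by
  have hint : ∀ n : ℤ, (∫ x in (0:ℝ)..1, (x:ℂ) * ee n x)
      = if n = 0 then 1/2 else 1/(2 * Real.pi * Complex.I * n) := by
    intro n
    rcases eq_or_ne n 0 with h | h
    · subst h
      simp only [ee, Int.cast_zero, mul_zero, zero_mul, Complex.exp_zero, mul_one]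
      rw [show (fun x:ℝ => (x:ℂ)) = (fun x:ℝ => ((x:ℝ):ℂ)) from rfl]
      rw [intervalIntegral.integral_ofReal]
      norm_num
    · have hc : (2 * (Real.pi:ℂ) * Complex.I * n) ≠ 0 := by
        simp [Real.pi_ne_zero, Complex.I_ne_zero, h]
      rw [if_neg h]
      simp only [ee_eq]
      rw [int_x_exp _ hc]
      have h1 : Complex.exp (2 * (Real.pi:ℂ) * Complex.I * n) = 1 := by
        rw [← Complex.exp_int_mul_two_pi_mul_I n]; congr 1; push_cast; ring
      rw [h1]
      field_simp
      ring
  have expand : ∀ x : ℝ, KK x * ee (-j) x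
      = (-2 * Real.pi * Complex.I) * ((x:ℂ) * ee (-j) x) + (Real.pi * Complex.I) * ee (-j) x := by
    intro x; unfold KK; ring
  simp only [expand]
  rw [intervalIntegral.integral_add
      (f := fun x : ℝ => (-2 * (Real.pi:ℂ) * Complex.I) * ((x:ℂ) * ee (-j) x))
      (g := fun x : ℝ => ((Real.pi:ℂ) * Complex.I) * ee (-j) x)
      ((continuous_const.mul ((by fun_prop : Continuous fun x:ℝ => (x:ℂ)).mul
        (ee_cont (-j)))).intervalIntegrable 0 1)
      ((continuous_const.mul (ee_cont (-j))).intervalIntegrable 0 1),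
    intervalIntegral.integral_const_mul, intervalIntegral.integral_const_mul,
    hint (-j), int_ee (-j)]
  rcases eq_or_ne j 0 with h | h
  · subst h; norm_num [kfun]; ring
  · rw [if_neg (neg_ne_zero.mpr h), if_neg (neg_ne_zero.mpr h), kfun, if_neg h]
    have hπ : (Real.pi : ℂ) ≠ 0 := by exact_mod_cast Real.pi_ne_zero
    have hj : (j : ℂ) ≠ 0 := Int.cast_ne_zero.mpr h
    push_cast
    field_simp
    ring

lemma parseval {ι : Type*} [DecidableEq ι] (t : Finset ι) (c : ι → ℂ) (f : ι → ℤ)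
    (hf : Set.InjOn f t) :
    (∫ x in (0:ℝ)..1, ‖∑ n ∈ t, c n * ee (f n) x‖^2) = ∑ n ∈ t, ‖c n‖^2 := by
  have step1 : ∀ x : ℝ, ((‖∑ n ∈ t, c n * ee (f n) x‖^2 : ℝ) : ℂ)
      = ∑ n ∈ t, ∑ m ∈ t, (c n * (starRingEnd ℂ) (c m)) * ee (f n - f m) x := by
    intro x
    have h0 : ((‖∑ n ∈ t, c n * ee (f n) x‖^2 : ℝ) : ℂ)
        = (∑ n ∈ t, c n * ee (f n) x) * (starRingEnd ℂ) (∑ n ∈ t, c n * ee (f n) x) := by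
      rw [Complex.mul_conj, Complex.normSq_eq_norm_sq]
    rw [h0]
    rw [map_sum, Finset.sum_mul_sum]
    refine Finset.sum_congr rfl fun n hn => Finset.sum_congr rfl fun m hm => ?_
    rw [map_mul, ee_conj, mul_mul_mul_comm, ee_mul]
    rw [sub_eq_add_neg]
  have step2 : (∫ x in (0:ℝ)..1, ((‖∑ n ∈ t, c n * ee (f n) x‖^2 : ℝ) : ℂ))
      = ∑ n ∈ t, ∑ m ∈ t, (c n * (starRingEnd ℂ) (c m)) * (if f n - f m = 0 then 1 else (0:ℂ)) := by
    rw [intervalIntegral.integral_congr (g :=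
      fun x => ∑ n ∈ t, ∑ m ∈ t, (c n * (starRingEnd ℂ) (c m)) * ee (f n - f m) x)
      (fun x _ => step1 x)]
    rw [intervalIntegral.integral_finset_sum
      (f := fun n x => ∑ m ∈ t, (c n * (starRingEnd ℂ) (c m)) * ee (f n - f m) x) (fun n _ =>
      ((continuous_finset_sum t (fun m _ => continuous_const.mul (ee_cont _))).intervalIntegrable
        0 1))]
    refine Finset.sum_congr rfl fun n hn => ?_
    rw [intervalIntegral.integral_finset_sum
      (f := fun m x => (c n * (starRingEnd ℂ) (c m)) * ee (f n - f m) x)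
      (fun m _ => (continuous_const.mul (ee_cont _)).intervalIntegrable 0 1)]
    refine Finset.sum_congr rfl fun m hm => ?_
    rw [intervalIntegral.integral_const_mul, int_ee]
  have step3 : (∑ n ∈ t, ∑ m ∈ t, (c n * (starRingEnd ℂ) (c m)) * (if f n - f m = 0 then 1 else (0:ℂ)))
      = ((∑ n ∈ t, ‖c n‖^2 : ℝ) : ℂ) := by
    push_cast
    refine Finset.sum_congr rfl fun n hn => ?_
    rw [Finset.sum_eq_single n]
    · rw [sub_self, if_pos rfl, mul_one, Complex.mul_conj, Complex.normSq_eq_norm_sq]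
      push_cast; ring
    · intro m hm hmn
      rw [if_neg, mul_zero]
      exact fun h => hmn (hf hm hn (sub_eq_zero.mp h).symm)
    · intro h; exact absurd hn h
  have : ((∫ x in (0:ℝ)..1, ‖∑ n ∈ t, c n * ee (f n) x‖^2 : ℝ) : ℂ)
      = ((∑ n ∈ t, ‖c n‖^2 : ℝ) : ℂ) := by
    rw [← intervalIntegral.integral_ofReal, step2, step3]
  exact_mod_cast this

noncomputable def Tfin (t : Finset ℤ) (a : ℤ → ℂ) (m : ℤ) : ℂ := ∑ n ∈ t, a n * kfun (m - n)

lemma bilinear (a b : ℤ → ℂ) (s t : Finset ℤ) :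
    (∑ m ∈ s, b m * Tfin t a m)
      = ∫ x in (0:ℝ)..1, KK x * ((∑ n ∈ t, a n * ee n x) * (∑ m ∈ s, b m * ee (-m) x)) := by
  have expand : ∀ x : ℝ, KK x * ((∑ n ∈ t, a n * ee n x) * (∑ m ∈ s, b m * ee (-m) x))
      = ∑ m ∈ s, ∑ n ∈ t, (b m * a n) * (KK x * ee (n - m) x) := by
    intro x
    calc KK x * ((∑ n ∈ t, a n * ee n x) * (∑ m ∈ s, b m * ee (-m) x))
        = ∑ n ∈ t, ∑ m ∈ s, KK x * ((a n * ee n x) * (b m * ee (-m) x)) := by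
          rw [Finset.sum_mul_sum, Finset.mul_sum]
          exact Finset.sum_congr rfl fun n _ => by rw [Finset.mul_sum]
      _ = ∑ m ∈ s, ∑ n ∈ t, (b m * a n) * (KK x * ee (n - m) x) := by
          rw [Finset.sum_comm]
          exact Finset.sum_congr rfl fun m _ => Finset.sum_congr rfl fun n _ => by
            rw [sub_eq_add_neg, ← ee_mul]; ring
  have hI : (∫ x in (0:ℝ)..1, KK x * ((∑ n ∈ t, a n * ee n x) * (∑ m ∈ s, b m * ee (-m) x)))
      = ∑ m ∈ s, ∑ n ∈ t, (b m * a n) * kfun (m - n) := by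
    rw [intervalIntegral.integral_congr (fun x _ => expand x)]
    rw [intervalIntegral.integral_finset_sum
      (f := fun m x => ∑ n ∈ t, (b m * a n) * (KK x * ee (n - m) x)) (fun m _ =>
      ((continuous_finset_sum t (fun n _ =>
        continuous_const.mul (KK_cont.mul (ee_cont _)))).intervalIntegrable 0 1))]
    refine Finset.sum_congr rfl fun m _ => ?_
    rw [intervalIntegral.integral_finset_sum
      (f := fun n x => (b m * a n) * (KK x * ee (n - m) x)) (fun n _ =>
      ((continuous_const.mul (KK_cont.mul (ee_cont _))).intervalIntegrable 0 1))]
    refine Finset.sum_congr rfl fun n _ => ?_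
    rw [intervalIntegral.integral_const_mul]
    congr 1
    rw [show (n : ℤ) - m = -(m - n) by ring, kcoeff]
  rw [hI]
  unfold Tfin
  refine Finset.sum_congr rfl fun m _ => ?_
  rw [Finset.mul_sum]
  exact Finset.sum_congr rfl fun n _ => by ring

lemma KK_bound {x : ℝ} (hx : x ∈ Set.uIcc (0:ℝ) 1) : ‖KK x‖ ≤ Real.pi := by
  unfold KK
  rw [Set.uIcc_of_le (by norm_num : (0:ℝ) ≤ 1)] at hx
  have hx0 : (0:ℝ) ≤ x := hx.1
  have hx1 : x ≤ 1 := hx.2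
  have h1 : ((x:ℂ) - 1/2) = (((x - 1/2 : ℝ)):ℂ) := by push_cast; ring
  rw [h1, norm_mul]
  have h2 : ‖(-2 * (Real.pi:ℂ) * Complex.I)‖ = 2 * Real.pi := by
    simp [Real.pi_nonneg]
  rw [h2, Complex.norm_real]
  have h3 : |x - 1/2| ≤ 1/2 := abs_le.mpr ⟨by linarith, by linarith⟩
  rw [Real.norm_eq_abs]
  nlinarith [Real.pi_pos]

lemma finite_bound (a : ℤ → ℂ) (t s : Finset ℤ) :
    ∑ m ∈ s, ‖Tfin t a m‖^2 ≤ Real.pi^2 * ∑ n ∈ t, ‖a n‖^2 := by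
  set A : ℝ := ∑ n ∈ t, ‖a n‖^2 with hA
  set X : ℝ := ∑ m ∈ s, ‖Tfin t a m‖^2 with hX
  have hA0 : 0 ≤ A := Finset.sum_nonneg fun _ _ => sq_nonneg _
  have hX0 : 0 ≤ X := Finset.sum_nonneg fun _ _ => sq_nonneg _
  set P : ℝ → ℂ := fun x => ∑ n ∈ t, a n * ee n x with hP
  set Q : ℝ → ℂ := fun x => ∑ m ∈ s, (starRingEnd ℂ) (Tfin t a m) * ee (-m) x with hQ
  have hPc : Continuous P := continuous_finset_sum _ fun n _ => continuous_const.mul (ee_cont _)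
  have hQc : Continuous Q := continuous_finset_sum _ fun m _ => continuous_const.mul (ee_cont _)
  have hPA : (∫ x in (0:ℝ)..1, ‖P x‖^2) = A :=
    parseval t a (fun n => n) (fun x _ y _ h => h)
  have hQX : (∫ x in (0:ℝ)..1, ‖Q x‖^2) = X := by
    rw [parseval s (fun m => (starRingEnd ℂ) (Tfin t a m)) (fun m => -m)
      (fun x _ y _ h => neg_injective h), hX]
    exact Finset.sum_congr rfl fun m _ => by rw [RCLike.norm_conj]
  have hXc : ((X:ℝ):ℂ) = ∑ m ∈ s, (starRingEnd ℂ) (Tfin t a m) * Tfin t a m := by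
    rw [hX]
    push_cast
    refine Finset.sum_congr rfl fun m _ => ?_
    rw [mul_comm, Complex.mul_conj, Complex.normSq_eq_norm_sq]
    push_cast
    ring
  have hXint : ((X:ℝ):ℂ) = ∫ x in (0:ℝ)..1, KK x * (P x * Q x) := by
    rw [hXc]
    exact bilinear a _ s t
  have step1 : X ≤ ∫ x in (0:ℝ)..1, Real.pi * (‖P x‖ * ‖Q x‖) := by
    have h1 : X = ‖((X:ℝ):ℂ)‖ := by
      rw [Complex.norm_real, Real.norm_eq_abs, _root_.abs_of_nonneg hX0]
    rw [h1, hXint]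
    refine le_trans (intervalIntegral.norm_integral_le_integral_norm (by norm_num)) ?_
    apply intervalIntegral.integral_mono_on (by norm_num)
      ((KK_cont.mul (hPc.mul hQc)).norm.intervalIntegrable 0 1)
      ((continuous_const.mul (hPc.norm.mul hQc.norm)).intervalIntegrable 0 1)
    intro x hx
    simp only [Pi.mul_apply]
    rw [norm_mul, norm_mul]
    have hb := KK_bound (x := x) (by rw [Set.uIcc_of_le (by norm_num : (0:ℝ) ≤ 1)]; exact hx)
    exact mul_le_mul_of_nonneg_right hb (by positivity)
  have step2 : ∀ lam : ℝ, 0 < lam →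
      (∫ x in (0:ℝ)..1, Real.pi * (‖P x‖ * ‖Q x‖))
        ≤ Real.pi * ((lam^2 * A + X) / (2*lam)) := by
    intro lam hlam
    rw [intervalIntegral.integral_const_mul]
    refine mul_le_mul_of_nonneg_left ?_ Real.pi_nonneg
    have hmono : (∫ x in (0:ℝ)..1, ‖P x‖ * ‖Q x‖)
        ≤ ∫ x in (0:ℝ)..1, (1/(2*lam)) * (lam^2 * ‖P x‖^2 + ‖Q x‖^2) := by
      apply intervalIntegral.integral_mono_on (by norm_num)
        ((hPc.norm.mul hQc.norm).intervalIntegrable 0 1)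
        ((continuous_const.mul ((continuous_const.mul
          ((hPc.norm.pow 2))).add (hQc.norm.pow 2))).intervalIntegrable 0 1)
      intro x _
      simp only [Pi.mul_apply, Pi.add_apply, Pi.pow_apply]
      rw [one_div, inv_mul_eq_div, le_div_iff₀ (by linarith)]
      nlinarith [sq_nonneg (lam * ‖P x‖ - ‖Q x‖), norm_nonneg (P x), norm_nonneg (Q x)]
    refine hmono.trans (le_of_eq ?_)
    rw [intervalIntegral.integral_const_mul, intervalIntegral.integral_add
      (f := fun x => lam^2 * ‖P x‖^2) (g := fun x => ‖Q x‖^2)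
      ((continuous_const.mul (hPc.norm.pow 2)).intervalIntegrable 0 1)
      ((hQc.norm.pow 2).intervalIntegrable 0 1), intervalIntegral.integral_const_mul, hPA, hQX]
    ring
  rcases eq_or_lt_of_le hX0 with hXz | hXpos
  · rw [← hXz]
    positivity
  rcases eq_or_lt_of_le hA0 with hAz | hApos
  · exfalso
    have hzero : ∀ n ∈ t, a n = 0 := by
      intro n hn
      have hs := (Finset.sum_eq_zero_iff_of_nonneg
        (fun i (_ : i ∈ t) => sq_nonneg ‖a i‖)).mp hAz.symm n hn
      have : ‖a n‖ = 0 := by nlinarith [norm_nonneg (a n)]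
      exact norm_eq_zero.mp this
    have hT : ∀ m, Tfin t a m = 0 := fun m =>
      Finset.sum_eq_zero fun n hn => by rw [hzero n hn, zero_mul]
    have : X = 0 := by
      rw [hX]
      exact Finset.sum_eq_zero fun m _ => by rw [hT m]; simp
    linarith
  · set lam : ℝ := X / (Real.pi * A) with hlam
    have hlampos : 0 < lam := div_pos hXpos (mul_pos Real.pi_pos hApos)
    have h := step1.trans (step2 lam hlampos)
    have h' : X * (2*lam) ≤ Real.pi * (lam^2*A + X) := by
      rw [← le_div_iff₀ (by linarith : (0:ℝ) < 2*lam), mul_div_assoc]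
      exact h
    rw [hlam] at h'
    have hπ : (0:ℝ) < Real.pi := Real.pi_pos
    have hπA : (0:ℝ) < Real.pi * A := by positivity
    have h2 := mul_le_mul_of_nonneg_right h' (le_of_lt (pow_pos hπA 2))
    have h3 : X * (2 * (X / (Real.pi * A))) * (Real.pi * A) ^ 2 = 2 * X^2 * (Real.pi * A) := by
      field_simp
    have h4 : Real.pi * ((X / (Real.pi * A)) ^ 2 * A + X) * (Real.pi * A) ^ 2
        = Real.pi * A * X^2 + Real.pi^3 * A^2 * X := by
      field_simp
    rw [h3, h4] at h2
    nlinarith [h2, mul_pos (mul_pos hπ hApos) hXpos, hXpos, hApos, hπ]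

lemma kfun_norm_sq (j : ℤ) : ‖kfun j‖^2 = 1/(j:ℝ)^2 := by
  unfold kfun
  rcases eq_or_ne j 0 with h|h
  · subst h; simp
  · rw [if_neg h, norm_div, norm_one]
    have : ((j:ℤ):ℂ) = (((j:ℝ)):ℂ) := by push_cast; ring
    rw [this, Complex.norm_real, Real.norm_eq_abs, div_pow, one_pow, _root_.sq_abs]

lemma summable_ksq (m : ℤ) : Summable (fun n : ℤ => ‖kfun (m - n)‖^2) := by
  have base : Summable (fun j : ℤ => 1/(j:ℝ)^2) := Real.summable_one_div_int_pow.mpr one_lt_two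
  have hinj : Function.Injective (fun n : ℤ => m - n) := fun x y h => by have : m - x = m - y := h; omega
  have := base.comp_injective hinj
  refine this.congr fun n => ?_
  simp only [Function.comp_apply, kfun_norm_sq]

lemma summable_mul_of_sq {f g : ℤ → ℝ} (h0f : ∀ i, 0 ≤ f i) (h0g : ∀ i, 0 ≤ g i)
    (hf : Summable fun i => f i^2) (hg : Summable fun i => g i^2) :
    Summable fun i => f i * g i := by
  refine Summable.of_nonneg_of_le (fun i => mul_nonneg (h0f i) (h0g i))
    (fun i => ?_) ((hf.add hg).div_const 2)
  nlinarith [sq_nonneg (f i - g i)]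

lemma summable_g (a : ℤ → ℂ) (ha2 : Summable fun n => ‖a n‖^2) (m : ℤ) :
    Summable (fun n : ℤ => a n * kfun (m - n)) := by
  apply Summable.of_norm
  simp_rw [norm_mul]
  exact summable_mul_of_sq (fun i => norm_nonneg _) (fun i => norm_nonneg _) ha2 (summable_ksq m)

noncomputable def Ta (a : ℤ → ℂ) (m : ℤ) : ℂ := ∑' n : ℤ, a n * kfun (m - n)

lemma sum_sq_Ta_le (a : ℤ → ℂ) (ha2 : Summable fun n => ‖a n‖^2) (s : Finset ℤ) :
    ∑ m ∈ s, ‖Ta a m‖^2 ≤ Real.pi^2 * ∑' n, ‖a n‖^2 := by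
  have hb : ∀ m : ℤ, Filter.Tendsto (fun t : Finset ℤ => Tfin t a m)
      Filter.atTop (nhds (Ta a m)) := fun m => (summable_g a ha2 m).hasSum
  have htend : Filter.Tendsto (fun t : Finset ℤ => ∑ m ∈ s, ‖Tfin t a m‖^2)
      Filter.atTop (nhds (∑ m ∈ s, ‖Ta a m‖^2)) :=
    tendsto_finset_sum s (fun m _ => ((hb m).norm).pow 2)
  refine le_of_tendsto htend (Filter.Eventually.of_forall fun t => ?_)
  refine (finite_bound a t s).trans ?_
  exact mul_le_mul_of_nonneg_left (Summable.sum_le_tsum t (fun n _ => sq_nonneg _) ha2) (sq_nonneg _)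

lemma summable_Ta_sq (a : ℤ → ℂ) (ha2 : Summable fun n => ‖a n‖^2) :
    Summable fun m => ‖Ta a m‖^2 :=
  summable_of_sum_le (fun m => sq_nonneg _) (sum_sq_Ta_le a ha2)

lemma tsum_Ta_sq_le (a : ℤ → ℂ) (ha2 : Summable fun n => ‖a n‖^2) :
    (∑' m, ‖Ta a m‖^2) ≤ Real.pi^2 * ∑' n, ‖a n‖^2 :=
  Summable.tsum_le_of_sum_le (summable_Ta_sq a ha2) (sum_sq_Ta_le a ha2)

lemma tsum_cs {f g : ℤ → ℝ} (h0f : ∀ i, 0 ≤ f i) (h0g : ∀ i, 0 ≤ g i)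
    (hf : Summable fun i => f i^2) (hg : Summable fun i => g i^2) :
    (∑' i, f i * g i) ≤ Real.sqrt (∑' i, f i^2) * Real.sqrt (∑' i, g i^2) := by
  refine Summable.tsum_le_of_sum_le (summable_mul_of_sq h0f h0g hf hg) (fun u => ?_)
  refine (Real.sum_mul_le_sqrt_mul_sqrt u f g).trans ?_
  gcongr
  · exact Summable.sum_le_tsum u (fun i _ => sq_nonneg _) hf
  · exact Summable.sum_le_tsum u (fun i _ => sq_nonneg _) hg

theorem stmt_9 (a b : ℤ → ℂ) (ha : Memℓp a 2) (hb : Memℓp b 2) :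
    ‖∑' m : ℤ, ∑' n : {n : ℤ // n ≠ m}, a n.1 * b m / ((m : ℂ) - (n.1 : ℂ))‖ ≤
      Real.pi * l2norm a * l2norm b := by
  have hconv : ∀ f : ℤ → ℂ, Memℓp f 2 → Summable fun n => ‖f n‖^2 := by
    intro f hf
    have h := (memℓp_gen_iff (p := 2) (by norm_num)).mp hf
    refine h.congr fun n => ?_
    rw [show ((2:ENNReal)).toReal = ((2:ℕ):ℝ) by norm_num, Real.rpow_natCast]
  have ha2 := hconv a ha
  have hb2 := hconv b hb
  have hinner : ∀ m : ℤ, (∑' n : {n : ℤ // n ≠ m}, a n.1 * b m / ((m : ℂ) - (n.1 : ℂ)))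
      = b m * Ta a m := by
    intro m
    have h1 : ∀ n : {n : ℤ // n ≠ m}, a n.1 * b m / ((m : ℂ) - (n.1:ℂ))
        = b m * (a n.1 * kfun (m - n.1)) := by
      intro n
      unfold kfun
      rw [if_neg (sub_ne_zero.mpr (Ne.symm n.2))]
      push_cast
      ring
    rw [tsum_congr h1, tsum_mul_left]
    congr 1
    have hsupp : Function.support (fun n : ℤ => a n * kfun (m - n)) ⊆ {n : ℤ | n ≠ m} := by
      intro n hn
      simp only [Function.mem_support, ne_eq] at hn
      simp only [Set.mem_setOf_eq, ne_eq]
      intro hnm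
      apply hn
      subst hnm
      simp [kfun]
    exact tsum_subtype_eq_of_support_subset hsupp
  rw [tsum_congr hinner]
  have hTa2 := summable_Ta_sq a ha2
  have hmul : Summable fun m => ‖b m‖ * ‖Ta a m‖ :=
    summable_mul_of_sq (fun _ => norm_nonneg _) (fun _ => norm_nonneg _) hb2 hTa2
  have h1 : ‖∑' m, b m * Ta a m‖ ≤ ∑' m, ‖b m‖ * ‖Ta a m‖ := by
    calc ‖∑' m, b m * Ta a m‖ ≤ ∑' m, ‖b m * Ta a m‖ :=
          norm_tsum_le_tsum_norm (by simpa [norm_mul] using hmul)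
      _ = ∑' m, ‖b m‖ * ‖Ta a m‖ := tsum_congr fun m => norm_mul _ _
  have h2 : (∑' m, ‖b m‖ * ‖Ta a m‖)
      ≤ Real.sqrt (∑' m, ‖b m‖^2) * Real.sqrt (∑' m, ‖Ta a m‖^2) :=
    tsum_cs (fun _ => norm_nonneg _) (fun _ => norm_nonneg _) hb2 hTa2
  have h3 : Real.sqrt (∑' m, ‖Ta a m‖^2) ≤ Real.pi * Real.sqrt (∑' n, ‖a n‖^2) := by
    have h := Real.sqrt_le_sqrt (tsum_Ta_sq_le a ha2)
    rwa [Real.sqrt_mul (sq_nonneg _), Real.sqrt_sq Real.pi_nonneg] at h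
  refine le_trans (h1.trans (h2.trans
    (mul_le_mul_of_nonneg_left h3 (Real.sqrt_nonneg _)))) (le_of_eq ?_)
  unfold l2norm
  ring
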